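/- Let H be a Hilbert space decomposed as a direct sum over indices {1,...,M}, with each component embedded in L^2(Π). Define κ(I) = sup{κ ≥ 0 : κ ≤ ‖Σ_{m∈I} f_m‖²_{L²} / Σ_{m∈I} ‖f_m‖²_{L²} for all choices of f_m} and ρ(I) = sup of the L²-correlation between functions supported on I and functions supported on the complement I^c. Then for any f = Σ_{m=1}^M f_m and any index set I ⊆ {1,...,M}, one has ‖f‖²_{L²(Π)} ≥ (1 − ρ(I)²) κ(I) Σ_{m∈I} ‖f_m‖²_{L²(Π)}. -/
import Mathlib


open scoped RealInnerProductSpace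
open Finset

/-- Incoherence lower bound (Lemma 1 of the paper): if `κ` satisfies the defining
inequality of `κ(I)` and `ρ` bounds the correlation between the span of the
components in `I` and those in `Iᶜ`, then
`‖∑ f_m‖² ≥ (1 − ρ²) κ ∑_{m∈I} ‖f_m‖²`. -/
theorem stmt0 {L : Type*} [NormedAddCommGroup L] [InnerProductSpace ℝ L]
    {M : ℕ} (V : Fin M → Submodule ℝ L) (I : Finset (Fin M))
    (κ ρ : ℝ) (hκ0 : 0 ≤ κ) (hρ0 : 0 ≤ ρ) (hρ1 : ρ ≤ 1)
    (hκ : ∀ g : Fin M → L, (∀ m, g m ∈ V m) →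
      κ * ∑ m ∈ I, ‖g m‖ ^ 2 ≤ ‖∑ m ∈ I, g m‖ ^ 2)
    (hρ : ∀ g : Fin M → L, (∀ m, g m ∈ V m) →
      |⟪∑ m ∈ I, g m, ∑ m ∈ Iᶜ, g m⟫| ≤ ρ * ‖∑ m ∈ I, g m‖ * ‖∑ m ∈ Iᶜ, g m‖)
    (f : Fin M → L) (hf : ∀ m, f m ∈ V m) :
    (1 - ρ ^ 2) * κ * ∑ m ∈ I, ‖f m‖ ^ 2 ≤ ‖∑ m, f m‖ ^ 2 := by
  set a := ‖∑ m ∈ I, f m‖ with ha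
  set b := ‖∑ m ∈ Iᶜ, f m‖ with hb
  have ha0 : 0 ≤ a := norm_nonneg _
  have hb0 : 0 ≤ b := norm_nonneg _
  have hsplit : (∑ m, f m) = (∑ m ∈ I, f m) + (∑ m ∈ Iᶜ, f m) :=
    (Finset.sum_add_sum_compl I f).symm
  have hnorm : ‖∑ m, f m‖ ^ 2
      = a ^ 2 + 2 * ⟪∑ m ∈ I, f m, ∑ m ∈ Iᶜ, f m⟫ + b ^ 2 := by
    rw [hsplit]
    rw [@norm_add_sq_real]
  have hip : -(ρ * a * b) ≤ ⟪∑ m ∈ I, f m, ∑ m ∈ Iᶜ, f m⟫ := by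
    have := hρ f hf
    have := neg_abs_le (⟪∑ m ∈ I, f m, ∑ m ∈ Iᶜ, f m⟫ : ℝ)
    linarith
  have key : (1 - ρ ^ 2) * a ^ 2 ≤ ‖∑ m, f m‖ ^ 2 := by
    have h1 : a ^ 2 - 2 * (ρ * a * b) + b ^ 2 ≤ ‖∑ m, f m‖ ^ 2 := by
      rw [hnorm]; linarith
    nlinarith [sq_nonneg (b - ρ * a)]
  have hκf := hκ f hf
  have hsum0 : 0 ≤ ∑ m ∈ I, ‖f m‖ ^ 2 :=
    Finset.sum_nonneg fun i _ => sq_nonneg _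
  have hρ2 : 0 ≤ 1 - ρ ^ 2 := by nlinarith
  calc (1 - ρ ^ 2) * κ * ∑ m ∈ I, ‖f m‖ ^ 2
      = (1 - ρ ^ 2) * (κ * ∑ m ∈ I, ‖f m‖ ^ 2) := by ring
    _ ≤ (1 - ρ ^ 2) * a ^ 2 := by
        exact mul_le_mul_of_nonneg_left hκf hρ2
    _ ≤ ‖∑ m, f m‖ ^ 2 := key
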